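/- h is strictly increasing on [0,∞), and its derivative h' is nonincreasing on [0,∞) (i.e. h is concave); in particular 0 < h'(t) ≤ 1 for all t ≥ 0. -/

import Mathlib

/-- `h` is strictly increasing on `[0,∞)`, its derivative `h'` is nonincreasing on
`[0,∞)` (so `h` is concave there), and `0 < h'(t) ≤ 1` for all `t ≥ 0`. -/
theorem shaYang_h_monotone_concave (α : ℝ) (hα : 0 < α) (f : ℝ → ℝ)
    (hf : ContDiff ℝ 2 f) (hf0 : f 0 = 1) (hf'0 : deriv f 0 = 0)
    (hfpos : ∀ t ≥ (0 : ℝ), 0 < f t)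
    (hode : ∀ t ≥ (0 : ℝ), deriv (deriv f) t = (α / 2) * (f t) ^ (-α - 1))
    (h : ℝ → ℝ) (hh : h = fun t => (2 / α) * deriv f t) :
    StrictMonoOn h (Set.Ici (0 : ℝ)) ∧
      AntitoneOn (deriv h) (Set.Ici (0 : ℝ)) ∧
      ∀ t ≥ (0 : ℝ), 0 < deriv h t ∧ deriv h t ≤ 1 := by
  have hα0 : α ≠ 0 := ne_of_gt hα
  have hf2 : ContDiff ℝ (1 + 1) f := by norm_num at hf ⊢; exact hf
  have hdf : ContDiff ℝ 1 (deriv f) := (contDiff_succ_iff_deriv.mp hf2).2.2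
  have hdfd : Differentiable ℝ (deriv f) := hdf.differentiable (by norm_num)
  -- f'' positive on [0,∞)
  have hf''pos : ∀ t ≥ (0 : ℝ), 0 < deriv (deriv f) t := by
    intro t ht
    rw [hode t ht]
    exact mul_pos (by positivity) (Real.rpow_pos_of_pos (hfpos t ht) _)
  -- deriv f strictly mono on [0,∞)
  have hdfmono : StrictMonoOn (deriv f) (Set.Ici (0 : ℝ)) := by
    apply strictMonoOn_of_deriv_pos (convex_Ici 0) hdf.continuous.continuousOn
    intro t ht
    rw [interior_Ici] at ht
    exact hf''pos t (le_of_lt ht)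
  have hdfnonneg : ∀ t ≥ (0 : ℝ), 0 ≤ deriv f t := by
    intro t ht
    rcases eq_or_lt_of_le ht with rfl | ht'
    · rw [hf'0]
    · rw [← hf'0]
      exact le_of_lt (hdfmono (Set.mem_Ici.mpr (le_refl 0)) (le_of_lt ht') ht')
  -- f monotone on [0,∞), hence f ≥ 1 there
  have hfmono : MonotoneOn f (Set.Ici (0 : ℝ)) := by
    apply monotoneOn_of_deriv_nonneg (convex_Ici 0) hf.continuous.continuousOn
      (fun t _ => (hf.differentiable (by norm_num)).differentiableAt.differentiableWithinAt)
    intro t ht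
    rw [interior_Ici] at ht
    exact hdfnonneg t (le_of_lt ht)
  have hfge1 : ∀ t ≥ (0 : ℝ), 1 ≤ f t := by
    intro t ht
    rw [← hf0]
    exact hfmono (Set.mem_Ici.mpr (le_refl 0)) ht ht
  -- formula for deriv h
  have hderivh : ∀ t, deriv h t = (2 / α) * deriv (deriv f) t := by
    intro t
    rw [hh]
    exact deriv_const_mul_field _
  have hkey : ∀ t ≥ (0 : ℝ), deriv h t = f t ^ (-α - 1) := by
    intro t ht
    rw [hderivh t, hode t ht]
    field_simp
  refine ⟨?_, ?_, ?_⟩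
  · -- h strictly mono
    apply strictMonoOn_of_deriv_pos (convex_Ici 0)
    · rw [hh]; exact (continuous_const.mul hdf.continuous).continuousOn
    · intro t ht
      rw [interior_Ici] at ht
      rw [hkey t (le_of_lt ht)]
      exact Real.rpow_pos_of_pos (hfpos t (le_of_lt ht)) _
  · -- deriv h antitone
    intro s hs t ht hst
    rw [hkey s hs, hkey t ht]
    exact Real.rpow_le_rpow_of_nonpos (hfpos s hs) (hfmono hs ht hst)
      (by linarith)
  · intro t ht
    rw [hkey t ht]
    constructor
    · exact Real.rpow_pos_of_pos (hfpos t ht) _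
    · exact Real.rpow_le_one_of_one_le_of_nonpos (hfge1 t ht) (by linarith)
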